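/- Let a ∈ ℝ, b > 0, c = a/b and c₀ < 0, and let ρ(x,t) = ρ¹(x,t) + ρ²(x,t) + ρ³(x,t) be the explicit solution defined below. For each x₀ ≥ 0 let ρ^F(·,·|x₀) be the Smoluchowski fundamental solution on the half-line with parameters a, b, x₀. Then for all x ≥ 0 and t > 0, ∫₀^∞ ρ^F(x,t|x₀) · (−c₀ e^{c₀ x₀}) dx₀ = ρ(x,t); that is, convolving the fundamental solution with the exponential initial density ρ₀(x₀) = −c₀ e^{c₀ x₀} yields the explicit formula ρ. -/

import Mathlib

open MeasureTheory Set Filter Topology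

/-- The standard normal cumulative distribution function `Φ`. -/
noncomputable def stdNormalCdf (z : ℝ) : ℝ :=
  ∫ x in Iic z, (Real.sqrt (2 * Real.pi))⁻¹ * Real.exp (-x ^ 2 / 2)

/-- First part `ρ¹` of the explicit solution (with `c = a/b`, `σ = √(2bt)`). -/
noncomputable def explRho1 (a b c₀ : ℝ) (x t : ℝ) : ℝ :=
  -c₀ * Real.exp (c₀ * (c₀ * b * t + x - a * t)) *
    stdNormalCdf ((2 * c₀ * b * t + x - a * t) / Real.sqrt (2 * b * t))

/-- Second part `ρ²` of the explicit solution (with `d = c₀ − a/b`). -/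
noncomputable def explRho2 (a b c₀ : ℝ) (x t : ℝ) : ℝ :=
  -c₀ * Real.exp ((c₀ - a / b) * ((c₀ - a / b) * b * t - x + a * t)) *
    stdNormalCdf ((2 * (c₀ - a / b) * b * t - x + a * t) / Real.sqrt (2 * b * t))

/-- Third part `ρ³` of the explicit solution (with `c = a/b`). -/
noncomputable def explRho3 (a b c₀ : ℝ) (x t : ℝ) : ℝ :=
  -(a / b) * Real.exp ((a / b) * x) *
      stdNormalCdf (-(x + a * t) / Real.sqrt (2 * b * t))
  + (a / b) * Real.exp ((a / b) * x) * Real.exp (c₀ * (c₀ * b * t - x - a * t)) *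
      stdNormalCdf ((2 * c₀ * b * t - x - a * t) / Real.sqrt (2 * b * t))

/-- The explicit solution `ρ = ρ¹ + ρ² + ρ³` of the Smoluchowski equation on the
half-line with exponential initial datum `ρ₀(x) = −c₀ e^{c₀ x}`. -/
noncomputable def explRho (a b c₀ : ℝ) (x t : ℝ) : ℝ :=
  explRho1 a b c₀ x t + explRho2 a b c₀ x t + explRho3 a b c₀ x t

/-- The Smoluchowski fundamental solution on the half-line with drift `a`,
diffusion `b` and initial point `x₀`. -/
noncomputable def smolFund (a b x₀ : ℝ) (x t : ℝ) : ℝ :=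
  (Real.sqrt (4 * Real.pi * b * t))⁻¹ * Real.exp (-(x - x₀ - a * t) ^ 2 / (4 * b * t))
  + (Real.sqrt (4 * Real.pi * b * t))⁻¹ *
      Real.exp (-(a / b) * x₀ - (x + x₀ - a * t) ^ 2 / (4 * b * t))
  - a / (2 * b) * Real.exp ((a / b) * x) *
      ((2 / Real.sqrt Real.pi) *
        ∫ y in Ioi ((x + x₀ + a * t) / Real.sqrt (4 * b * t)), Real.exp (-y ^ 2))

lemma integral_comp_add_right_Ioi (f : ℝ → ℝ) (a d : ℝ) :
    ∫ x in Ioi a, f (x + d) = ∫ x in Ioi (a + d), f x := by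
  have A : MeasurableEmbedding fun x : ℝ => x + d :=
    (Homeomorph.addRight d).isClosedEmbedding.measurableEmbedding
  have h := A.setIntegral_map (μ := volume) f (Ioi (a + d))
  rw [map_add_right_eq_self volume d] at h
  have hpre : (fun x : ℝ => x + d) ⁻¹' Ioi (a + d) = Ioi a := by
    rw [preimage_add_const_Ioi]; ring_nf
  rw [hpre] at h
  exact h.symm

lemma stdNormalCdf_eq (z : ℝ) :
    stdNormalCdf z = (Real.sqrt (2 * Real.pi))⁻¹ * ∫ x in Iic z, Real.exp (-x ^ 2 / 2) := by
  rw [stdNormalCdf, integral_const_mul]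

lemma gauss_Ioi (μ σ : ℝ) (hσ : 0 < σ) :
    ∫ x in Ioi (0:ℝ), Real.exp (-(x - μ)^2 / (2*σ^2))
      = σ * (Real.sqrt (2*Real.pi) * stdNormalCdf (μ/σ)) := by
  have hπ : (0:ℝ) < Real.sqrt (2*Real.pi) := Real.sqrt_pos.mpr (by positivity)
  have h1 : ∫ x in Ioi (0:ℝ), Real.exp (-(x - μ)^2 / (2*σ^2))
      = ∫ x in Ioi (0:ℝ), (fun y => Real.exp (-(y - μ/σ)^2/2)) (σ⁻¹ * x) := by
    refine setIntegral_congr_fun measurableSet_Ioi fun x _ => ?_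
    have hσ' : σ ≠ 0 := hσ.ne'
    show Real.exp (-(x - μ) ^ 2 / (2 * σ ^ 2)) = Real.exp (-(σ⁻¹ * x - μ / σ) ^ 2 / 2)
    rw [show -(x - μ) ^ 2 / (2 * σ ^ 2) = -(σ⁻¹ * x - μ / σ) ^ 2 / 2 by field_simp]
  rw [h1, integral_comp_mul_left_Ioi (fun y => Real.exp (-(y - μ/σ)^2/2)) 0 (inv_pos.mpr hσ)]
  simp only [mul_zero, inv_inv, smul_eq_mul]
  have h2 : ∫ x in Ioi (0:ℝ), Real.exp (-(x - μ/σ)^2/2)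
      = ∫ x in Ioi (0:ℝ), (fun y => Real.exp (-y^2/2)) (x + -(μ/σ)) := by
    refine setIntegral_congr_fun measurableSet_Ioi fun x _ => ?_
    simp only [← sub_eq_add_neg]
  rw [h2, integral_comp_add_right_Ioi (fun y => Real.exp (-y^2/2)) 0 (-(μ/σ)), zero_add]
  have h3 : ∫ x in Ioi (-(μ/σ)), Real.exp (-x^2/2)
      = ∫ x in Iic (μ/σ), Real.exp (-x^2/2) := by
    rw [← integral_comp_neg_Iic]
    refine setIntegral_congr_fun measurableSet_Iic fun x _ => by simp
  rw [h3, stdNormalCdf_eq]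
  field_simp

lemma complete_square (k m σ x : ℝ) (hσ : σ ≠ 0) :
    k*x - (x+m)^2/(2*σ^2) = (k^2*σ^2/2 - k*m) + (-(x - (k*σ^2 - m))^2/(2*σ^2)) := by
  field_simp
  ring

lemma expGauss_Ioi (k m σ : ℝ) (hσ : 0 < σ) :
    ∫ x in Ioi (0:ℝ), Real.exp (k*x - (x+m)^2/(2*σ^2))
      = Real.exp (k^2*σ^2/2 - k*m) *
        (σ * (Real.sqrt (2*Real.pi) * stdNormalCdf ((k*σ^2 - m)/σ))) := by
  have h1 : ∫ x in Ioi (0:ℝ), Real.exp (k*x - (x+m)^2/(2*σ^2))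
      = ∫ x in Ioi (0:ℝ), Real.exp (k^2*σ^2/2 - k*m) *
          Real.exp (-(x - (k*σ^2 - m))^2/(2*σ^2)) := by
    refine setIntegral_congr_fun measurableSet_Ioi fun x _ => ?_
    rw [← Real.exp_add, complete_square k m σ x hσ.ne']
  rw [h1, integral_const_mul, gauss_Ioi _ _ hσ]

lemma expGauss_integrable (k m σ : ℝ) (hσ : 0 < σ) :
    IntegrableOn (fun x => Real.exp (k*x - (x+m)^2/(2*σ^2))) (Ioi 0) := by
  have h := integrable_exp_neg_mul_sq (b := (2*σ^2)⁻¹) (by positivity)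
  have h2 := (h.comp_sub_right (k*σ^2 - m)).const_mul (Real.exp (k^2*σ^2/2 - k*m))
  have he : (fun x => Real.exp (k^2*σ^2/2 - k*m) *
      Real.exp (-(2*σ^2)⁻¹ * (x - (k*σ^2 - m))^2))
      = fun x => Real.exp (k*x - (x+m)^2/(2*σ^2)) := by
    funext x
    rw [← Real.exp_add]
    congr 1
    rw [complete_square k m σ x hσ.ne']
    field_simp
  rw [← he]
  exact h2.integrableOn

noncomputable def gTail (z : ℝ) : ℝ := ∫ y in Ioi z, Real.exp (-y^2)

lemma integrable_exp_neg_sq : Integrable (fun y : ℝ => Real.exp (-y^2)) := by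
  have := integrable_exp_neg_mul_sq (b := (1:ℝ)) one_pos
  simpa using this

lemma gTail_nonneg (z : ℝ) : 0 ≤ gTail z :=
  setIntegral_nonneg measurableSet_Ioi fun y _ => (Real.exp_pos _).le

lemma gTail_le (z : ℝ) : gTail z ≤ ∫ y : ℝ, Real.exp (-y^2) :=
  setIntegral_le_integral integrable_exp_neg_sq
    (Eventually.of_forall fun y => (Real.exp_pos _).le)

lemma gTail_eq (z : ℝ) :
    gTail z = Real.sqrt Real.pi * stdNormalCdf (-(Real.sqrt 2 * z)) := by
  have h2 : (0:ℝ) < Real.sqrt 2 := Real.sqrt_pos.mpr two_pos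
  have h1 : gTail z = ∫ y in Ioi (0:ℝ),
      (fun u => Real.exp (-u^2)) (y + z) := by
    rw [integral_comp_add_right_Ioi (fun u => Real.exp (-u^2)) 0 z, zero_add, gTail]
  have hσ : ((Real.sqrt 2)⁻¹:ℝ) > 0 := inv_pos.mpr h2
  have hσ2 : ((Real.sqrt 2)⁻¹:ℝ)^2 = 1/2 := by
    rw [inv_pow, Real.sq_sqrt two_pos.le]
    norm_num
  have h3 : ∫ y in Ioi (0:ℝ), (fun u => Real.exp (-u^2)) (y + z)
      = ∫ y in Ioi (0:ℝ), Real.exp (-(y - (-z))^2 / (2*((Real.sqrt 2)⁻¹)^2)) := by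
    refine setIntegral_congr_fun measurableSet_Ioi fun y _ => ?_
    show Real.exp (-(y+z)^2) = _
    rw [hσ2]
    norm_num
  rw [h1, h3, gauss_Ioi _ _ hσ]
  have : Real.sqrt (2*Real.pi) = Real.sqrt 2 * Real.sqrt Real.pi := Real.sqrt_mul two_pos.le _
  rw [this]
  have harg : (-z) / (Real.sqrt 2)⁻¹ = -(Real.sqrt 2 * z) := by field_simp
  rw [harg]
  field_simp

lemma gTail_eq_sub (z : ℝ) :
    gTail z = gTail 0 - ∫ y in (0:ℝ)..z, Real.exp (-y^2) := by
  have hI := integrable_exp_neg_sq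
  have hsplit : ∀ w : ℝ, (∫ y in Iic w, Real.exp (-y^2)) + gTail w
      = ∫ y : ℝ, Real.exp (-y^2) := by
    intro w
    rw [gTail, ← setIntegral_union (Iic_disjoint_Ioi le_rfl) measurableSet_Ioi
      hI.integrableOn hI.integrableOn, Iic_union_Ioi, setIntegral_univ]
  have h1 := hsplit z
  have h2 := hsplit 0
  have h3 : (∫ y in Iic z, Real.exp (-y^2)) - ∫ y in Iic (0:ℝ), Real.exp (-y^2)
      = ∫ y in (0:ℝ)..z, Real.exp (-y^2) :=
    intervalIntegral.integral_Iic_sub_Iic hI.integrableOn hI.integrableOn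
  linarith

lemma gTail_hasDerivAt (z : ℝ) : HasDerivAt gTail (-Real.exp (-z^2)) z := by
  have hI := integrable_exp_neg_sq
  have h : HasDerivAt (fun u => ∫ y in (0:ℝ)..u, Real.exp (-y^2)) (Real.exp (-z^2)) z := by
    refine intervalIntegral.integral_hasDerivAt_right hI.intervalIntegrable ?_ ?_
    · exact hI.aestronglyMeasurable.stronglyMeasurableAtFilter
    · exact (Real.continuous_exp.comp (by continuity)).continuousAt
  have h2 := (hasDerivAt_const z (gTail 0)).sub h
  rw [zero_sub] at h2
  refine h2.congr_of_eventuallyEq (Eventually.of_forall fun u => gTail_eq_sub u)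

lemma gTail_continuous : Continuous gTail :=
  continuous_iff_continuousAt.mpr fun z => (gTail_hasDerivAt z).continuousAt

lemma exp_mul_tendsto {c₀ : ℝ} (hc₀ : c₀ < 0) :
    Tendsto (fun x : ℝ => Real.exp (c₀ * x)) atTop (𝓝 0) := by
  have h1 : Tendsto (fun x : ℝ => (-c₀) * x) atTop atTop :=
    Tendsto.const_mul_atTop (by linarith) tendsto_id
  have h2 := (Real.tendsto_exp_neg_atTop_nhds_zero).comp h1
  refine h2.congr fun x => ?_
  simp only [Function.comp]
  ring_nf

lemma exp_integrableOn {c₀ : ℝ} (hc₀ : c₀ < 0) :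
    IntegrableOn (fun x : ℝ => Real.exp (c₀ * x)) (Ioi 0) := by
  have := exp_neg_integrableOn_Ioi 0 (show (0:ℝ) < -c₀ by linarith)
  refine this.congr_fun (fun x _ => by ring_nf) measurableSet_Ioi

lemma expGTail_integrable (c₀ P S : ℝ) (hc₀ : c₀ < 0) :
    IntegrableOn (fun x₀ : ℝ => Real.exp (c₀*x₀) * gTail ((x₀+P)/S)) (Ioi 0) := by
  set M : ℝ := ∫ y : ℝ, Real.exp (-y^2) with hM
  have hAmeas : Continuous (fun x₀ : ℝ => Real.exp (c₀*x₀) * gTail ((x₀+P)/S)) :=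
    (Real.continuous_exp.comp (continuous_const.mul continuous_id)).mul
      (gTail_continuous.comp (by continuity))
  refine Integrable.mono' ((exp_integrableOn hc₀).const_mul M)
    hAmeas.aestronglyMeasurable.restrict (Eventually.of_forall fun x₀ => ?_)
  -- pointwise
  rw [Real.norm_eq_abs, abs_mul, abs_of_pos (Real.exp_pos _),
    abs_of_nonneg (gTail_nonneg _)]
  calc Real.exp (c₀*x₀) * gTail ((x₀+P)/S) ≤ Real.exp (c₀*x₀) * M :=
        mul_le_mul_of_nonneg_left (gTail_le _) (Real.exp_pos _).le
    _ = M * Real.exp (c₀*x₀) := by ring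

lemma piece3 (c₀ P S σ : ℝ) (hc₀ : c₀ < 0) (hS : 0 < S) (hσ : 0 < σ)
    (hSσ : S^2 = 2*σ^2) :
    ∫ x₀ in Ioi (0:ℝ), Real.exp (c₀*x₀) * gTail ((x₀+P)/S)
      = -(gTail (P/S))/c₀
        + (1/(c₀*S)) * ∫ x₀ in Ioi (0:ℝ), Real.exp (c₀*x₀ - (x₀+P)^2/(2*σ^2)) := by
  have hc₀' : c₀ ≠ 0 := hc₀.ne
  have hS' : S ≠ 0 := hS.ne'
  set M : ℝ := ∫ y : ℝ, Real.exp (-y^2) with hM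
  set A : ℝ → ℝ := fun x₀ => Real.exp (c₀*x₀) * gTail ((x₀+P)/S) with hA
  set B : ℝ → ℝ := fun x₀ => (1/(c₀*S)) * Real.exp (c₀*x₀ - (x₀+P)^2/(2*σ^2)) with hB
  set H : ℝ → ℝ := fun x₀ => Real.exp (c₀*x₀)/c₀ * gTail ((x₀+P)/S) with hH
  have hM0 : 0 ≤ M := le_trans (gTail_nonneg 0) (gTail_le 0)
  -- derivative
  have hderiv : ∀ x₀ : ℝ, HasDerivAt H (A x₀ - B x₀) x₀ := by
    intro x₀
    have h1 : HasDerivAt (fun y : ℝ => Real.exp (c₀*y)/c₀)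
        (Real.exp (c₀*x₀) * c₀ / c₀) x₀ := by
      simpa using (((hasDerivAt_id x₀).const_mul c₀).exp).div_const c₀
    have hin : HasDerivAt (fun y : ℝ => (y+P)/S) (1/S) x₀ := by
      simpa using ((hasDerivAt_id x₀).add_const P).div_const S
    have h2 : HasDerivAt (fun y : ℝ => gTail ((y+P)/S))
        (-Real.exp (-((x₀+P)/S)^2) * (1/S)) x₀ :=
      by have := (gTail_hasDerivAt ((x₀+P)/S)).comp x₀ hin; exact this
    have h3 : HasDerivAt (fun y => Real.exp (c₀*y)/c₀ * gTail ((y+P)/S)) _ x₀ := h1.mul h2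
    convert h3 using 1
    simp only [hA, hB, hH]
    rw [show c₀*x₀ - (x₀+P)^2/(2*σ^2) = c₀*x₀ + (-((x₀+P)/S)^2) by
      rw [div_pow, hSσ]; ring]
    rw [Real.exp_add]
    field_simp
    ring
  -- tendsto
  have hnorm : ∀ x₀ : ℝ, ‖H x₀‖ = Real.exp (c₀*x₀) * (-c₀)⁻¹ * gTail ((x₀+P)/S) := by
    intro x₀
    rw [Real.norm_eq_abs, abs_mul, abs_div, abs_of_pos (Real.exp_pos _),
      abs_of_neg hc₀, abs_of_nonneg (gTail_nonneg _), div_eq_mul_inv]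
  have htend : Tendsto H atTop (𝓝 0) := by
    refine squeeze_zero_norm (a := fun x₀ : ℝ => Real.exp (c₀*x₀) * (-c₀)⁻¹ * M) (fun x₀ => ?_) ?_
    · show ‖H x₀‖ ≤ Real.exp (c₀*x₀) * (-c₀)⁻¹ * M
      rw [hnorm x₀]
      have : (0:ℝ) ≤ Real.exp (c₀*x₀) * (-c₀)⁻¹ :=
        mul_nonneg (Real.exp_pos _).le (inv_nonneg.mpr (by linarith))
      exact mul_le_mul_of_nonneg_left (gTail_le _) this
    · have := ((exp_mul_tendsto hc₀).mul_const ((-c₀)⁻¹)).mul_const M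
      simpa using this
  -- integrability
  have hAint : IntegrableOn A (Ioi 0) := expGTail_integrable c₀ P S hc₀
  have hBint : IntegrableOn B (Ioi 0) := by
    have := (expGauss_integrable c₀ P σ hσ).const_mul (1/(c₀*S))
    exact this
  -- apply FTC
  have hftc : ∫ x₀ in Ioi (0:ℝ), (A x₀ - B x₀) = 0 - H 0 := by
    refine integral_Ioi_of_hasDerivAt_of_tendsto' (fun x _ => hderiv x) ?_ htend
    exact hAint.sub hBint
  rw [integral_sub hAint hBint] at hftc
  have hH0 : H 0 = gTail (P/S) / c₀ := by
    simp only [hH]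
    rw [mul_zero, Real.exp_zero, zero_add]
    ring
  have hBval : ∫ x₀ in Ioi (0:ℝ), B x₀
      = (1/(c₀*S)) * ∫ x₀ in Ioi (0:ℝ), Real.exp (c₀*x₀ - (x₀+P)^2/(2*σ^2)) := by
    simp only [hB]
    rw [integral_const_mul]
  rw [hBval, hH0] at hftc
  have heta : (∫ a in Ioi (0:ℝ), A a) = MeasureTheory.integral (volume.restrict (Ioi 0)) A := rfl
  rw [heta] at hftc
  show MeasureTheory.integral (volume.restrict (Ioi 0)) A = _
  linear_combination hftc

/-- Convolving the Smoluchowski fundamental solution with the exponential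
initial density `ρ₀(x₀) = −c₀ e^{c₀ x₀}` yields the explicit solution formula. -/
theorem stmt_9 (a b c₀ : ℝ) (hb : 0 < b) (hc₀ : c₀ < 0) :
    ∀ x ≥ (0:ℝ), ∀ t > (0:ℝ),
      (∫ x₀ in Ioi (0:ℝ), smolFund a b x₀ x t * (-c₀ * Real.exp (c₀ * x₀)))
        = explRho a b c₀ x t := by
  intro x hx t ht
  have hc₀' : c₀ ≠ 0 := hc₀.ne
  have hb' : b ≠ 0 := hb.ne'
  set σ : ℝ := Real.sqrt (2*b*t) with hσdef
  set S : ℝ := Real.sqrt (4*b*t) with hSdef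
  have hσpos : 0 < σ := Real.sqrt_pos.mpr (by positivity)
  have hSpos : 0 < S := Real.sqrt_pos.mpr (by positivity)
  have hσ2 : σ^2 = 2*b*t := Real.sq_sqrt (by positivity)
  have hS2 : S^2 = 4*b*t := Real.sq_sqrt (by positivity)
  have hSσ : S^2 = 2*σ^2 := by rw [hS2, hσ2]; ring
  have h2σ : 2*σ^2 = 4*b*t := by rw [hσ2]; ring
  have hsqrt2 : (0:ℝ) < Real.sqrt 2 := Real.sqrt_pos.mpr two_pos
  have hsqrtπ : (0:ℝ) < Real.sqrt Real.pi := Real.sqrt_pos.mpr Real.pi_pos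
  have hsqrt2π : Real.sqrt (2*Real.pi) = Real.sqrt 2 * Real.sqrt Real.pi :=
    Real.sqrt_mul two_pos.le _
  have h2πpos : (0:ℝ) < Real.sqrt (2*Real.pi) := by
    rw [hsqrt2π]; positivity
  have hS_eq : S = Real.sqrt 2 * σ := by
    rw [hSdef, hσdef, ← Real.sqrt_mul two_pos.le]
    congr 1; ring
  have h4π : Real.sqrt (4*Real.pi*b*t) = Real.sqrt (2*Real.pi) * σ := by
    rw [hσdef, ← Real.sqrt_mul (by positivity : (0:ℝ) ≤ 2*Real.pi)]
    congr 1; ring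
  set P : ℝ := x + a*t with hP
  -- the three pieces
  set f1 : ℝ → ℝ := fun x₀ =>
    ((Real.sqrt (2*Real.pi) * σ)⁻¹ * (-c₀)) *
      Real.exp (c₀*x₀ - (x₀ + (a*t - x))^2/(2*σ^2)) with hf1
  set f2 : ℝ → ℝ := fun x₀ =>
    ((Real.sqrt (2*Real.pi) * σ)⁻¹ * (-c₀)) *
      Real.exp ((c₀ - a/b)*x₀ - (x₀ + (x - a*t))^2/(2*σ^2)) with hf2
  set f3 : ℝ → ℝ := fun x₀ =>
    (a/(2*b) * Real.exp ((a/b)*x) * (2/Real.sqrt Real.pi) * (-c₀)) *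
      (Real.exp (c₀*x₀) * gTail ((x₀ + P)/S)) with hf3
  -- pointwise decomposition
  have hpt : ∀ x₀ ∈ Ioi (0:ℝ), smolFund a b x₀ x t * (-c₀ * Real.exp (c₀ * x₀))
      = f1 x₀ + f2 x₀ - f3 x₀ := by
    intro x₀ _
    rw [smolFund, hf1, hf2, hf3]
    simp only
    have e1 : (Real.sqrt (4*Real.pi*b*t))⁻¹ * Real.exp (-(x - x₀ - a*t)^2/(4*b*t)) *
        (-c₀ * Real.exp (c₀*x₀))
        = ((Real.sqrt (2*Real.pi) * σ)⁻¹ * (-c₀)) *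
          Real.exp (c₀*x₀ - (x₀ + (a*t - x))^2/(2*σ^2)) := by
      rw [h4π]
      have hee : Real.exp (-(x - x₀ - a*t)^2/(4*b*t)) * Real.exp (c₀*x₀)
          = Real.exp (c₀*x₀ - (x₀ + (a*t - x))^2/(2*σ^2)) := by
        rw [← Real.exp_add]
        congr 1
        rw [h2σ]; ring
      calc (Real.sqrt (2*Real.pi) * σ)⁻¹ * Real.exp (-(x - x₀ - a*t)^2/(4*b*t)) *
            (-c₀ * Real.exp (c₀*x₀))
          = ((Real.sqrt (2*Real.pi) * σ)⁻¹ * (-c₀)) *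
            (Real.exp (-(x - x₀ - a*t)^2/(4*b*t)) * Real.exp (c₀*x₀)) := by ring
        _ = _ := by rw [hee]
    have e2 : (Real.sqrt (4*Real.pi*b*t))⁻¹ *
        Real.exp (-(a/b)*x₀ - (x + x₀ - a*t)^2/(4*b*t)) * (-c₀ * Real.exp (c₀*x₀))
        = ((Real.sqrt (2*Real.pi) * σ)⁻¹ * (-c₀)) *
          Real.exp ((c₀ - a/b)*x₀ - (x₀ + (x - a*t))^2/(2*σ^2)) := by
      rw [h4π]
      have hee : Real.exp (-(a/b)*x₀ - (x + x₀ - a*t)^2/(4*b*t)) * Real.exp (c₀*x₀)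
          = Real.exp ((c₀ - a/b)*x₀ - (x₀ + (x - a*t))^2/(2*σ^2)) := by
        rw [← Real.exp_add]
        congr 1
        rw [h2σ]; ring
      calc (Real.sqrt (2*Real.pi) * σ)⁻¹ *
            Real.exp (-(a/b)*x₀ - (x + x₀ - a*t)^2/(4*b*t)) * (-c₀ * Real.exp (c₀*x₀))
          = ((Real.sqrt (2*Real.pi) * σ)⁻¹ * (-c₀)) *
            (Real.exp (-(a/b)*x₀ - (x + x₀ - a*t)^2/(4*b*t)) * Real.exp (c₀*x₀)) := by ring
        _ = _ := by rw [hee]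
    have e3 : a / (2*b) * Real.exp ((a/b)*x) *
        ((2/Real.sqrt Real.pi) * ∫ y in Ioi ((x + x₀ + a*t)/S), Real.exp (-y^2)) *
        (-c₀ * Real.exp (c₀*x₀))
        = (a/(2*b) * Real.exp ((a/b)*x) * (2/Real.sqrt Real.pi) * (-c₀)) *
          (Real.exp (c₀*x₀) * gTail ((x₀ + P)/S)) := by
      rw [show (x + x₀ + a*t)/S = (x₀ + P)/S by rw [hP]; ring_nf]
      rw [← gTail]
      ring
    rw [sub_mul, add_mul, e1, e2, e3]
  rw [setIntegral_congr_fun measurableSet_Ioi hpt]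
  -- integrability
  have hint1 : IntegrableOn f1 (Ioi 0) := by
    rw [hf1]
    exact (expGauss_integrable c₀ (a*t - x) σ hσpos).const_mul _
  have hint2 : IntegrableOn f2 (Ioi 0) := by
    rw [hf2]
    exact (expGauss_integrable (c₀ - a/b) (x - a*t) σ hσpos).const_mul _
  have hint3 : IntegrableOn f3 (Ioi 0) := by
    rw [hf3]
    exact (expGTail_integrable c₀ P S hc₀).const_mul _
  have hint12 : IntegrableOn (fun x₀ => f1 x₀ + f2 x₀) (Ioi 0) := hint1.add hint2
  rw [integral_sub hint12 hint3, integral_add hint1 hint2]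
  -- value of the three integrals
  have hv1 : ∫ x₀ in Ioi (0:ℝ), f1 x₀ = explRho1 a b c₀ x t := by
    rw [hf1]
    rw [integral_const_mul, expGauss_Ioi _ _ _ hσpos, explRho1, ← hσdef]
    rw [show c₀^2*σ^2/2 - c₀*(a*t - x) = c₀ * (c₀*b*t + x - a*t) by rw [hσ2]; ring]
    rw [show (c₀*σ^2 - (a*t - x))/σ = (2*c₀*b*t + x - a*t)/σ by rw [hσ2]; ring_nf]
    field_simp
  have hv2 : ∫ x₀ in Ioi (0:ℝ), f2 x₀ = explRho2 a b c₀ x t := by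
    rw [hf2]
    rw [integral_const_mul, expGauss_Ioi _ _ _ hσpos, explRho2, ← hσdef]
    rw [show (c₀ - a/b)^2*σ^2/2 - (c₀ - a/b)*(x - a*t)
        = (c₀ - a/b) * ((c₀ - a/b)*b*t - x + a*t) by rw [hσ2]; ring]
    rw [show ((c₀ - a/b)*σ^2 - (x - a*t))/σ = (2*(c₀ - a/b)*b*t - x + a*t)/σ by
      rw [hσ2]; ring_nf]
    field_simp
  have hv3 : ∫ x₀ in Ioi (0:ℝ), f3 x₀ = - explRho3 a b c₀ x t := by
    rw [hf3]
    rw [integral_const_mul, piece3 c₀ P S σ hc₀ hSpos hσpos hSσ,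
      expGauss_Ioi _ _ _ hσpos, gTail_eq, explRho3, ← hσdef]
    rw [show -(Real.sqrt 2 * (P/S)) = -(x + a*t)/σ by
      rw [hS_eq, hP]; field_simp]
    rw [show c₀^2*σ^2/2 - c₀*P = c₀ * (c₀*b*t - x - a*t) by rw [hσ2, hP]; ring]
    rw [show (c₀*σ^2 - P)/σ = (2*c₀*b*t - x - a*t)/σ by rw [hσ2, hP]; ring_nf]
    rw [hS_eq, hsqrt2π]
    field_simp
  rw [hv1, hv2, hv3, explRho]
  ring
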